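/- Fix an integer k ≥ 1 and let x_k > 0 be the positive solution of x/720 − log(4(x+2k)) = 5. Fix c > 0 and set M = k + 1 + 10·max(x_k, c). Let n > c be an integer, p = c/n, and let H be an (n,k,p) Newman–Watts small world. Then P(there exists a connected set S ⊆ [n], 1 ≤ |S| ≤ n, with e(S,S) > M·max(|S|, log n)) ≤ 1/n³, where e(S,S) denotes the number of edges of H with both endpoints in S. -/

import Mathlib

open scoped Classical

noncomputable section

/-- The `(n,k)`-ring adjacency on `Fin n` (with mod-`n` arithmetic):
`x` and `y` are adjacent iff `(y-x) mod n ∈ {1,…,k}` (equivalently, in `{-k,…,-1}`). -/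
def ringAdj (n k : ℕ) (x y : Fin n) : Prop :=
  x ≠ y ∧ ((y - x).val ≤ k ∨ (x - y).val ≤ k)

/-- The Newman–Watts small world determined by the Bernoulli coordinates `η`:
the `(n,k)`-ring together with all pairs `{x,y}` with `η s(x,y) = true`. -/
def nwGraph (n k : ℕ) (η : Sym2 (Fin n) → Bool) : SimpleGraph (Fin n) where
  Adj x y := x ≠ y ∧ ((y - x).val ≤ k ∨ (x - y).val ≤ k ∨ η s(x, y) = true)
  symm := ⟨by
    rintro x y ⟨hne, h⟩
    refine ⟨hne.symm, ?_⟩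
    rcases h with h | h | h
    · exact Or.inr (Or.inl h)
    · exact Or.inl h
    · exact Or.inr (Or.inr (by rwa [Sym2.eq_swap]))⟩
  loopless := ⟨by rintro x ⟨hne, -⟩; exact hne rfl⟩

/-- Product-Bernoulli(`p`) weight of an outcome `η`. -/
def nwWeight (n : ℕ) (p : ℝ) (η : Sym2 (Fin n) → Bool) : ℝ :=
  ∏ e : Sym2 (Fin n), if η e then p else 1 - p

/-- Probability of an event under the product Bernoulli(`p`) measure. -/
def nwPr (n : ℕ) (p : ℝ) (A : (Sym2 (Fin n) → Bool) → Prop) : ℝ :=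
  ∑ η : Sym2 (Fin n) → Bool, if A η then nwWeight n p η else 0

/-- Expectation under the product Bernoulli(`p`) measure. -/
def nwExp (n : ℕ) (p : ℝ) (X : (Sym2 (Fin n) → Bool) → ℝ) : ℝ :=
  ∑ η : Sym2 (Fin n) → Bool, nwWeight n p η * X η

variable {V : Type*} [Fintype V] [DecidableEq V]

/-- Degree of `v` in `G`. -/
def gdeg (G : SimpleGraph V) (v : V) : ℕ :=
  (Finset.univ.filter fun u => G.Adj v u).card

/-- Number of edges of `G`. -/
def edgeCount (G : SimpleGraph V) : ℕ := (∑ v, gdeg G v) / 2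

/-- `e(S,Sᶜ)`: number of edges with one endpoint in `S`, the other outside. -/
def eCross (G : SimpleGraph V) (S : Finset V) : ℕ :=
  ∑ x ∈ S, ∑ y ∈ Sᶜ, if G.Adj x y then 1 else 0

/-- `e(S) = Σ_{v∈S} deg v`. -/
def eTot (G : SimpleGraph V) (S : Finset V) : ℕ := ∑ x ∈ S, gdeg G x

/-- `e(S,S)`: number of edges with both endpoints in `S`. -/
def eIn (G : SimpleGraph V) (S : Finset V) : ℕ :=
  (∑ x ∈ S, ∑ y ∈ S, if G.Adj x y then 1 else 0) / 2

/-- `S` is connected if the induced subgraph `G[S]` is connected. -/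
def connectedSet (G : SimpleGraph V) (S : Finset V) : Prop :=
  (G.induce (S : Set V)).Connected

/-- One step of the lazy simple random walk applied to a distribution. -/
def lazyStep (G : SimpleGraph V) (μ : V → ℝ) : V → ℝ := fun v =>
  μ v / 2 + ∑ u ∈ Finset.univ.filter (fun u => G.Adj u v), μ u / (2 * gdeg G u)

/-- Distribution of the lazy simple random walk after `t` steps, started at `x`. -/
def walkDist (G : SimpleGraph V) (x : V) : ℕ → V → ℝ
  | 0 => fun v => if v = x then 1 else 0
  | (t + 1) => lazyStep G (walkDist G x t)

/-- Stationary distribution `π(v) = deg v / (2|E|)`. -/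
def statDist (G : SimpleGraph V) (v : V) : ℝ := gdeg G v / (2 * edgeCount G)

/-- Total variation distance. -/
def tvDist (μ ν : V → ℝ) : ℝ := (∑ v, |μ v - ν v|) / 2

/-- Mixing time `max_x min {t : ‖μ_{t,x} − π‖_TV ≤ 1/4}`. -/
def mixingTime (G : SimpleGraph V) : ℕ :=
  Finset.univ.sup fun x => sInf {t : ℕ | tvDist (walkDist G x t) (statDist G) ≤ 1 / 4}




section AuxNW
open Finset

private lemma sum_prod_bool {ι : Type*} [Fintype ι] [DecidableEq ι] (g : ι → Bool → ℝ) :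
    ∑ η : ι → Bool, ∏ e, g e (η e) = ∏ e, (g e true + g e false) := by
  classical
  have h := Finset.prod_univ_sum (fun _ : ι => (Finset.univ : Finset Bool)) g
  rw [Fintype.piFinset_univ] at h
  rw [← h]
  exact Finset.prod_congr rfl fun e _ => by simp

variable {n : ℕ} {p : ℝ}

private lemma nwWeight_nonneg (hp0 : 0 ≤ p) (hp1 : p ≤ 1) (η : Sym2 (Fin n) → Bool) :
    0 ≤ nwWeight n p η :=
  Finset.prod_nonneg fun e _ => by split <;> linarith

private lemma nwPr_mono (hp0 : 0 ≤ p) (hp1 : p ≤ 1) {A B : (Sym2 (Fin n) → Bool) → Prop}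
    (h : ∀ η, A η → B η) : nwPr n p A ≤ nwPr n p B := by
  refine Finset.sum_le_sum fun η _ => ?_
  by_cases hA : A η
  · rw [if_pos hA, if_pos (h η hA)]
  · rw [if_neg hA]
    split
    · exact nwWeight_nonneg hp0 hp1 η
    · exact le_refl 0

private lemma nwPr_union (hp0 : 0 ≤ p) (hp1 : p ≤ 1) {ι : Type*}
    (I : Finset ι) (A : ι → (Sym2 (Fin n) → Bool) → Prop) :
    nwPr n p (fun η => ∃ i ∈ I, A i η) ≤ ∑ i ∈ I, nwPr n p (A i) := by
  unfold nwPr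
  rw [Finset.sum_comm]
  refine Finset.sum_le_sum fun η _ => ?_
  by_cases h : ∃ i ∈ I, A i η
  · rw [if_pos h]
    obtain ⟨i, hi, hAi⟩ := h
    refine le_trans ?_ (Finset.single_le_sum (f := fun i => if A i η then nwWeight n p η else 0)
      (fun i _ => by
        show (0:ℝ) ≤ if A i η then nwWeight n p η else 0
        split; exacts [nwWeight_nonneg hp0 hp1 η, le_refl 0]) hi)
    show nwWeight n p η ≤ if A i η then nwWeight n p η else 0
    rw [if_pos hAi]
  · rw [if_neg h]
    exact Finset.sum_nonneg fun i _ => by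
      split; exacts [nwWeight_nonneg hp0 hp1 η, le_refl 0]

private lemma nwPr_allTrue (F : Finset (Sym2 (Fin n))) :
    nwPr n p (fun η => ∀ e ∈ F, η e = true) = p ^ F.card := by
  classical
  set g : Sym2 (Fin n) → Bool → ℝ := fun e b =>
    if e ∈ F then (if b then p else 0) else (if b then p else 1 - p) with hg
  have step1 : nwPr n p (fun η => ∀ e ∈ F, η e = true)
      = ∑ η : Sym2 (Fin n) → Bool, ∏ e, g e (η e) := by
    refine Finset.sum_congr rfl fun η _ => ?_
    by_cases h : ∀ e ∈ F, η e = true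
    · rw [if_pos h]
      refine Finset.prod_congr rfl fun e _ => ?_
      by_cases he : e ∈ F
      · simp only [hg, he, if_true, h e he]
      · simp only [hg, he, if_false]
    · rw [if_neg h]
      push_neg at h
      obtain ⟨e0, he0, hne⟩ := h
      refine (Finset.prod_eq_zero (Finset.mem_univ e0) ?_).symm
      have hfalse : η e0 = false := by simpa using hne
      simp only [hg, he0, if_true, hfalse, Bool.false_eq_true, if_false]
  rw [step1, sum_prod_bool]
  have h2 : ∀ e : Sym2 (Fin n), g e true + g e false = if e ∈ F then p else 1 := by
    intro e; by_cases he : e ∈ F <;> simp [hg, he]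
  rw [Finset.prod_congr rfl fun e _ => h2 e, Finset.prod_ite_mem, Finset.univ_inter,
    Finset.prod_const]


/-- number of non-ring-diagonal η-true pairs inside S -/
private def tc {n : ℕ} (S : Finset (Fin n)) (η : Sym2 (Fin n) → Bool) : ℕ :=
  (S.sym2.filter (fun e => ¬ e.IsDiag ∧ η e = true)).card

private lemma tc_mono {n : ℕ} {S S' : Finset (Fin n)} (h : S ⊆ S') (η) :
    tc S η ≤ tc S' η :=
  Finset.card_le_card (Finset.filter_subset_filter _ (Finset.sym2_mono h))

private lemma ring_half_card {n : ℕ} [NeZero n] (k : ℕ) (x : Fin n)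
    (f : Fin n → Fin n) (hf : Function.Injective f) (hf0 : ∀ y, f y = 0 ↔ y = x) :
    (Finset.univ.filter (fun y : Fin n => y ≠ x ∧ (f y).val ≤ k)).card ≤ k := by
  have h := Finset.card_le_card_of_injOn (fun y => (f y).val)
    (s := Finset.univ.filter (fun y : Fin n => y ≠ x ∧ (f y).val ≤ k))
    (t := Finset.Icc 1 k) ?_ ?_
  · simpa using h
  · intro y hy
    simp only [Finset.coe_filter, Finset.mem_filter, Finset.mem_univ, true_and, Set.mem_setOf_eq] at hy
    simp only [Finset.coe_Icc, Finset.mem_coe, Finset.mem_Icc, Set.mem_Icc]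
    refine ⟨Nat.one_le_iff_ne_zero.mpr ?_, hy.2⟩
    intro h0
    exact hy.1 ((hf0 y).mp (Fin.val_injective (by simpa using h0)))
  · intro a _ b _ hab
    exact hf (Fin.val_injective hab)

private lemma ring_card {n : ℕ} (hn : 0 < n) (k : ℕ) (x : Fin n) :
    (Finset.univ.filter (fun y : Fin n =>
      x ≠ y ∧ ((y - x).val ≤ k ∨ (x - y).val ≤ k))).card ≤ 2 * k := by
  haveI : NeZero n := ⟨hn.ne'⟩
  have hsub : (Finset.univ.filter (fun y : Fin n =>
        x ≠ y ∧ ((y - x).val ≤ k ∨ (x - y).val ≤ k)))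
      ⊆ (Finset.univ.filter (fun y : Fin n => y ≠ x ∧ (y - x).val ≤ k))
        ∪ (Finset.univ.filter (fun y : Fin n => y ≠ x ∧ (x - y).val ≤ k)) := by
    intro y hy
    simp only [Finset.mem_filter, Finset.mem_univ, true_and] at hy
    rcases hy.2 with h | h
    · exact Finset.mem_union_left _ (by simp [hy.1.symm, h])
    · exact Finset.mem_union_right _ (by simp [hy.1.symm, h])
  calc _ ≤ _ := Finset.card_le_card hsub
    _ ≤ _ + _ := Finset.card_union_le _ _
    _ ≤ k + k := by
        gcongr
        · exact ring_half_card k x (fun y => y - x) sub_left_injective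
            (fun y => sub_eq_zero)
        · exact ring_half_card k x (fun y => x - y) sub_right_injective
            (fun y => by rw [sub_eq_zero, eq_comm])
    _ = 2 * k := (two_mul k).symm

private lemma eIn_le_aux {n : ℕ} (hn : 0 < n) (k : ℕ) (η) (S : Finset (Fin n)) :
    eIn (nwGraph n k η) S ≤ k * S.card + tc S η := by
  have key : (∑ x ∈ S, ∑ y ∈ S, if (nwGraph n k η).Adj x y then 1 else 0)
      ≤ 2 * (k * S.card + tc S η) := by
    have pointwise : ∀ x ∈ S, ∀ y ∈ S, (if (nwGraph n k η).Adj x y then 1 else 0)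
        ≤ ((if (x ≠ y ∧ ((y - x).val ≤ k ∨ (x - y).val ≤ k)) then 1 else 0)
          + (if (x ≠ y ∧ η s(x, y) = true) then 1 else 0) : ℕ) := by
      intro x _ y _
      by_cases hA : (nwGraph n k η).Adj x y
      · rw [if_pos hA]
        obtain ⟨hne, hor⟩ := hA
        rcases hor with h | h | h
        · rw [if_pos ⟨hne, Or.inl h⟩]; exact Nat.le_add_right 1 _
        · rw [if_pos ⟨hne, Or.inr h⟩]; exact Nat.le_add_right 1 _
        · have hc2 : x ≠ y ∧ η s(x, y) = true := ⟨hne, h⟩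
          rw [if_pos hc2]
          exact Nat.le_add_left 1 _
      · rw [if_neg hA]; exact Nat.zero_le _
    have h1 : (∑ x ∈ S, ∑ y ∈ S,
        if (x ≠ y ∧ ((y - x).val ≤ k ∨ (x - y).val ≤ k)) then 1 else 0)
        ≤ 2 * k * S.card := by
      have : ∀ x ∈ S, (∑ y ∈ S,
          if (x ≠ y ∧ ((y - x).val ≤ k ∨ (x - y).val ≤ k)) then 1 else 0) ≤ 2 * k := by
        intro x _
        rw [← Finset.card_filter]
        refine le_trans (Finset.card_le_card (fun y hy => ?_)) (ring_card hn k x)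
        simp only [Finset.mem_filter, Finset.mem_univ, true_and] at hy ⊢
        exact hy.2
      calc _ ≤ ∑ _x ∈ S, 2 * k := Finset.sum_le_sum this
        _ = 2 * k * S.card := by rw [Finset.sum_const, smul_eq_mul, mul_comm]
    have h2 : (∑ x ∈ S, ∑ y ∈ S, if (x ≠ y ∧ η s(x, y) = true) then 1 else 0)
        ≤ 2 * tc S η := by
      set Q : Finset (Fin n × Fin n) :=
        (S ×ˢ S).filter (fun z => z.1 ≠ z.2 ∧ η s(z.1, z.2) = true) with hQ
      have hcount : (∑ x ∈ S, ∑ y ∈ S, if (x ≠ y ∧ η s(x, y) = true) then 1 else 0)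
          = Q.card := by
        rw [hQ, Finset.card_filter, Finset.sum_product]
      rw [hcount]
      have himg : Q.image (fun z => s(z.1, z.2)) ⊆
          S.sym2.filter (fun e => ¬ e.IsDiag ∧ η e = true) := by
        intro e he
        obtain ⟨z, hz, rfl⟩ := Finset.mem_image.mp he
        rw [hQ, Finset.mem_filter, Finset.mem_product] at hz
        refine Finset.mem_filter.mpr ⟨Finset.mk_mem_sym2_iff.mpr ⟨hz.1.1, hz.1.2⟩, ?_, hz.2.2⟩
        rw [Sym2.mk_isDiag_iff]
        exact hz.2.1
      have hfib : ∀ b ∈ Q.image (fun z => s(z.1, z.2)),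
          (Q.filter (fun z => s(z.1, z.2) = b)).card ≤ 2 := by
        intro b hb
        obtain ⟨a, _, rfl⟩ := Finset.mem_image.mp hb
        refine le_trans (Finset.card_le_card
          (t := ({(a.1, a.2), (a.2, a.1)} : Finset (Fin n × Fin n))) (fun z hz => ?_)) ?_
        · rw [Finset.mem_filter] at hz
          have := Sym2.eq_iff.mp hz.2
          simp only [Finset.mem_insert, Finset.mem_singleton]
          rcases this with ⟨h1, h2⟩ | ⟨h1, h2⟩
          · exact Or.inl (Prod.ext h1 h2)
          · exact Or.inr (Prod.ext h1 h2)
        · exact le_trans (Finset.card_insert_le _ _) (by simp)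
      calc Q.card ≤ 2 * (Q.image (fun z => s(z.1, z.2))).card :=
            Finset.card_le_mul_card_image Q 2 hfib
        _ ≤ 2 * tc S η :=
            Nat.mul_le_mul_left 2 (Finset.card_le_card himg)
    calc (∑ x ∈ S, ∑ y ∈ S, if (nwGraph n k η).Adj x y then 1 else 0)
        ≤ ∑ x ∈ S, ∑ y ∈ S,
          ((if (x ≠ y ∧ ((y - x).val ≤ k ∨ (x - y).val ≤ k)) then 1 else 0)
            + (if (x ≠ y ∧ η s(x, y) = true) then 1 else 0)) := by
          refine Finset.sum_le_sum fun x hx => Finset.sum_le_sum fun y hy => pointwise x hx y hy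
      _ = (∑ x ∈ S, ∑ y ∈ S,
            if (x ≠ y ∧ ((y - x).val ≤ k ∨ (x - y).val ≤ k)) then 1 else 0)
          + ∑ x ∈ S, ∑ y ∈ S, if (x ≠ y ∧ η s(x, y) = true) then 1 else 0 := by
          rw [← Finset.sum_add_distrib]
          exact Finset.sum_congr rfl fun x _ => Finset.sum_add_distrib
      _ ≤ 2 * k * S.card + 2 * tc S η := Nat.add_le_add h1 h2
      _ = 2 * (k * S.card + tc S η) := by ring
  unfold eIn
  calc _ ≤ (2 * (k * S.card + tc S η)) / 2 := Nat.div_le_div_right key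
    _ = k * S.card + tc S η := Nat.mul_div_cancel_left _ (by norm_num)

private lemma reduce {n : ℕ} (k : ℕ) {X : ℝ} (hX : 1 ≤ X) (hn : 0 < n)
    (η : Sym2 (Fin n) → Bool) (S : Finset (Fin n)) (h1 : 1 ≤ S.card)
    (hlt : ((k : ℝ) + 1 + 10 * X) * max (S.card : ℝ) (Real.log n)
      < (eIn (nwGraph n k η) S : ℝ)) :
    ∃ S' : Finset (Fin n), (Real.log n ≤ S'.card ∧ 1 ≤ S'.card) ∧
      5 * X * S'.card ≤ (tc S' η : ℝ) := by
  have hsR : (1:ℝ) ≤ S.card := by exact_mod_cast h1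
  have hEle : (eIn (nwGraph n k η) S : ℝ) ≤ k * S.card + tc S η := by
    have := eIn_le_aux hn k η S
    push_cast
    exact_mod_cast this
  have hmax_s : (S.card : ℝ) ≤ max (S.card : ℝ) (Real.log n) := le_max_left _ _
  have hks : (k:ℝ) * S.card ≤ (k:ℝ) * max (S.card : ℝ) (Real.log n) :=
    mul_le_mul_of_nonneg_left hmax_s (Nat.cast_nonneg k)
  have hT : (1 + 10 * X) * max (S.card : ℝ) (Real.log n) < tc S η := by nlinarith
  rcases le_or_gt (Real.log n) (S.card : ℝ) with hcase | hcase
  · refine ⟨S, ⟨hcase, h1⟩, ?_⟩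
    rw [max_eq_left hcase] at hT
    nlinarith [hsR]
  · -- pad S up to ⌈log n⌉
    set m' : ℕ := ⌈Real.log n⌉₊ with hm'
    have hlog1 : (1:ℝ) < Real.log n := lt_of_le_of_lt hsR hcase
    have hlog0 : (0:ℝ) ≤ Real.log n := by linarith
    have hm2 : 2 ≤ m' := by
      have : (1:ℕ) < m' := Nat.lt_ceil.mpr (by exact_mod_cast hlog1)
      omega
    have hm'n : m' ≤ n := by
      refine Nat.ceil_le.mpr ?_
      have := Real.log_le_sub_one_of_pos (show (0:ℝ) < n by exact_mod_cast hn)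
      linarith
    have hsm' : S.card ≤ m' := by
      have h1' : (S.card : ℝ) ≤ m' := le_trans hcase.le (Nat.le_ceil _)
      exact_mod_cast h1'
    obtain ⟨S', hSS', hcard⟩ := Finset.exists_superset_card_eq hsm'
      (by simpa using hm'n)
    have hm'R : (m' : ℝ) - 1 ≤ Real.log n := by
      have := Nat.ceil_lt_add_one hlog0
      simp only [← hm'] at this
      linarith
    have hm2R : (2:ℝ) ≤ m' := by exact_mod_cast hm2
    refine ⟨S', ⟨?_, ?_⟩, ?_⟩
    · rw [hcard]; exact Nat.le_ceil _
    · omega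
    · have htc : (tc S η : ℝ) ≤ tc S' η := by exact_mod_cast tc_mono hSS' η
      rw [hcard]
      rw [max_eq_right hcase.le] at hT
      have step : 5 * X * (m' : ℝ) ≤ (1 + 10 * X) * ((m' : ℝ) - 1) := by
        nlinarith [mul_nonneg (by linarith : (0:ℝ) ≤ 1 + 5 * X) (by linarith : (0:ℝ) ≤ (m':ℝ) - 2)]
      have step2 : (1 + 10 * X) * ((m' : ℝ) - 1) ≤ (1 + 10 * X) * Real.log n :=
        mul_le_mul_of_nonneg_left hm'R (by linarith)
      linarith


private lemma choose_le_aux (N a : ℕ) (ha : 1 ≤ a) :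
    (N.choose a : ℝ) ≤ (Real.exp 1 * N / a) ^ a := by
  have h1 : (N.choose a : ℝ) ≤ (N:ℝ)^a / a.factorial := by
    have := Nat.choose_le_pow_div (α := ℝ) a N
    push_cast at this ⊢
    exact this
  have h2 : ((a:ℝ))^a / a.factorial ≤ Real.exp a := by
    refine le_trans ?_ (Real.sum_le_exp_of_nonneg (by positivity) (a+1))
    exact Finset.single_le_sum (f := fun i => (a:ℝ)^i / i.factorial)
      (fun i _ => by positivity) (Finset.self_mem_range_succ a)
  have hfac : (0:ℝ) < a.factorial := by exact_mod_cast a.factorial_pos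
  have hapos : (0:ℝ) < a := by exact_mod_cast ha
  have hN : (0:ℝ) ≤ N := Nat.cast_nonneg N
  have hexp : Real.exp a = Real.exp 1 ^ a := by
    rw [← Real.exp_nat_mul]; norm_num
  have h3 : ((a:ℝ))^a ≤ Real.exp 1 ^ a * a.factorial := by
    rw [div_le_iff₀ hfac] at h2; rw [← hexp]; exact h2
  calc (N.choose a : ℝ) ≤ (N:ℝ)^a / a.factorial := h1
    _ ≤ (Real.exp 1 * N / a)^a := by
        rw [div_pow, mul_pow, div_le_div_iff₀ hfac (pow_pos hapos a)]
        calc (N:ℝ)^a * (a:ℝ)^a ≤ (N:ℝ)^a * (Real.exp 1 ^ a * a.factorial) :=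
              mul_le_mul_of_nonneg_left h3 (pow_nonneg hN a)
          _ = Real.exp 1 ^ a * (N:ℝ)^a * a.factorial := by ring

private lemma exp_base : Real.exp 1 / 5 ≤ Real.exp (-(1/2 : ℝ)) := by
  have h3 : Real.exp 3 < 25 := by
    have h := Real.exp_one_lt_d9
    calc Real.exp 3 = Real.exp 1 ^ 3 := by
          rw [← Real.exp_nat_mul]; norm_num
      _ < 2.7182818286 ^ 3 :=
          pow_lt_pow_left₀ h (Real.exp_pos 1).le (by norm_num)
      _ < 25 := by norm_num
  have h15 : Real.exp (3/2 : ℝ) < 5 := by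
    nlinarith [Real.exp_pos (3/2 : ℝ), Real.exp_add (3/2 : ℝ) (3/2 : ℝ),
      (by norm_num : (3/2 : ℝ) + 3/2 = 3)]
  rw [Real.exp_neg, div_le_iff₀ (by norm_num : (0:ℝ) < 5)]
  rw [inv_mul_eq_div, le_div_iff₀ (Real.exp_pos _)]
  calc Real.exp 1 * Real.exp (1/2) = Real.exp (3/2 : ℝ) := by
        rw [← Real.exp_add]; norm_num
    _ ≤ 5 := h15.le

private lemma claim (n j m : ℕ) (X c : ℝ) (hX : 3600 ≤ X) (hc : 0 < c) (hcX : c ≤ X)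
    (hj1 : 1 ≤ j) (hjn : j ≤ n) (hlog : Real.log n ≤ (j:ℝ)) (hm : 5 * X * j ≤ (m:ℝ)) :
    (n.choose j : ℝ) * ((j^2).choose m : ℝ) * (c / n)^m
      ≤ (1/2)^j * (1 / (n:ℝ)^3) := by
  have hn1 : 1 ≤ n := le_trans hj1 hjn
  have hnR : (1:ℝ) ≤ n := by exact_mod_cast hn1
  have hnpos : (0:ℝ) < n := by linarith
  have hjR : (1:ℝ) ≤ j := by exact_mod_cast hj1
  have hjpos : (0:ℝ) < j := by linarith
  have hjnR : (j:ℝ) ≤ n := by exact_mod_cast hjn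
  have hXj : (3600:ℝ) * j ≤ X * j := by
    exact mul_le_mul_of_nonneg_right hX (by linarith)
  have hmR : (18000:ℝ) * j ≤ m := by nlinarith
  have hm1 : 1 ≤ m := by
    have : (1:ℝ) ≤ m := by nlinarith
    exact_mod_cast this
  have hmj : j ≤ m := by
    have : (j:ℝ) ≤ m := by nlinarith
    exact_mod_cast this
  have hmpos : (0:ℝ) < m := by
    have : (1:ℝ) ≤ m := by exact_mod_cast hm1
    linarith
  have hlog0 : 0 ≤ Real.log n := Real.log_nonneg hnR
  -- choose bounds
  have c1 : (n.choose j : ℝ) ≤ (Real.exp 1 * n / j)^j := choose_le_aux n j hj1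
  have c2 : ((j^2).choose m : ℝ) ≤ (Real.exp 1 * (j^2 : ℕ) / m)^m := choose_le_aux (j^2) m hm1
  have hpn : (0:ℝ) ≤ c / n := by positivity
  have step1 : (n.choose j : ℝ) * ((j^2).choose m : ℝ) * (c / n)^m
      ≤ (Real.exp 1 * n / j)^j * ((Real.exp 1 * (j^2:ℕ) / m) * (c/n))^m := by
    rw [mul_pow]
    have hcc := mul_le_mul c1 c2 (Nat.cast_nonneg _) (by positivity)
    calc (n.choose j : ℝ) * ((j^2).choose m : ℝ) * (c / n)^m
        ≤ ((Real.exp 1 * n / j)^j * (Real.exp 1 * (j^2:ℕ) / m)^m) * (c/n)^m :=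
          mul_le_mul_of_nonneg_right hcc (by positivity)
      _ = (Real.exp 1 * n / j)^j * ((Real.exp 1 * (j^2:ℕ) / m)^m * (c/n)^m) := by ring
  -- base bound
  have hbase : (Real.exp 1 * (j^2:ℕ) / m) * (c/n) ≤ (Real.exp 1 / 5) * ((j:ℝ)/n) := by
    push_cast
    have h5Xj : (0:ℝ) < 5 * X * j := by nlinarith
    have hb1 : Real.exp 1 * (j:ℝ)^2 / m ≤ Real.exp 1 * (j:ℝ)^2 / (5 * X * j) := by
      apply div_le_div_of_nonneg_left (by positivity) h5Xj hm
    have hb2 : Real.exp 1 * (j:ℝ)^2 / (5 * X * j) = (Real.exp 1 * j / (5 * X)) := by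
      field_simp
    calc Real.exp 1 * (j:ℝ)^2 / m * (c/n)
        ≤ Real.exp 1 * (j:ℝ)^2 / (5 * X * j) * (c/n) := by
          exact mul_le_mul_of_nonneg_right hb1 hpn
      _ = (Real.exp 1 / 5) * ((j:ℝ)/n) * (c / X) := by
          rw [hb2]; field_simp
      _ ≤ (Real.exp 1 / 5) * ((j:ℝ)/n) * 1 := by
          refine mul_le_mul_of_nonneg_left ?_ (by positivity)
          rw [div_le_one (by linarith)]; exact hcX
      _ = (Real.exp 1 / 5) * ((j:ℝ)/n) := by ring
  have hbase0 : (0:ℝ) ≤ (Real.exp 1 * (j^2:ℕ) / m) * (c/n) := by positivity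
  have step2 : (Real.exp 1 * n / j)^j * ((Real.exp 1 * (j^2:ℕ) / m) * (c/n))^m
      ≤ (Real.exp 1 * n / j)^j * ((Real.exp 1 / 5) * ((j:ℝ)/n))^m := by
    refine mul_le_mul_of_nonneg_left (pow_le_pow_left₀ hbase0 hbase m) (by positivity)
  -- algebraic rearrangement
  have key : (Real.exp 1 * n / j)^j * ((Real.exp 1 / 5) * ((j:ℝ)/n))^m
      = Real.exp 1 ^ j * (Real.exp 1 / 5)^m * ((j:ℝ)/n)^(m - j) := by
    have hsplit : m = j + (m - j) := by omega
    rw [mul_pow]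
    rw [show ((j:ℝ)/n)^m = ((j:ℝ)/n)^j * ((j:ℝ)/n)^(m-j) by
      rw [← pow_add, ← hsplit]]
    have hcancel : ((Real.exp 1 * n / j))^j * ((j:ℝ)/n)^j
        = Real.exp 1 ^ j := by
      rw [← mul_pow]
      congr 1
      field_simp
    calc (Real.exp 1 * n / j)^j * ((Real.exp 1/5)^m * (((j:ℝ)/n)^j * ((j:ℝ)/n)^(m-j)))
        = ((Real.exp 1 * n / j)^j * ((j:ℝ)/n)^j) * (Real.exp 1/5)^m * ((j:ℝ)/n)^(m-j) := by
          ring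
      _ = Real.exp 1 ^ j * (Real.exp 1 / 5)^m * ((j:ℝ)/n)^(m - j) := by rw [hcancel]
  have step3 : Real.exp 1 ^ j * (Real.exp 1 / 5)^m * ((j:ℝ)/n)^(m - j)
      ≤ Real.exp 1 ^ j * (Real.exp 1 / 5)^m * 1 := by
    refine mul_le_mul_of_nonneg_left ?_ (by positivity)
    refine pow_le_one₀ (by positivity) ?_
    rw [div_le_one hnpos]; exact hjnR
  -- exponential estimates
  have step4 : Real.exp 1 ^ j * (Real.exp 1 / 5)^m ≤ Real.exp 1 ^ j * Real.exp (-(1/2:ℝ))^m :=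
    mul_le_mul_of_nonneg_left (pow_le_pow_left₀ (by positivity) exp_base m) (by positivity)
  have hexpj : Real.exp 1 ^ j = Real.exp j := by rw [← Real.exp_nat_mul]; norm_num
  have hexpm : Real.exp (-(1/2:ℝ))^m = Real.exp (-(m/2 : ℝ)) := by
    rw [← Real.exp_nat_mul]; congr 1; ring
  have step5 : Real.exp (j : ℝ) * Real.exp (-(m/2:ℝ)) ≤ Real.exp (-(j:ℝ) - 3 * Real.log n) := by
    rw [← Real.exp_add]
    apply Real.exp_le_exp.mpr
    -- j - m/2 ≤ -j - 3 log n
    linarith [hlog, hmR, hjpos]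
  have hfinal : Real.exp (-(j:ℝ) - 3 * Real.log n)
      = Real.exp (-1 : ℝ)^j * (1 / (n:ℝ)^3) := by
    have h1 : Real.exp (-(j:ℝ)) = Real.exp (-1:ℝ)^j := by
      rw [← Real.exp_nat_mul]; congr 1; ring
    have h2 : Real.exp (3 * Real.log n) = (n:ℝ)^3 := by
      rw [show (3:ℝ) * Real.log n = (3:ℕ) * Real.log n by norm_num,
        Real.exp_nat_mul, Real.exp_log hnpos]
    rw [Real.exp_sub, h1, h2, div_eq_mul_one_div]
  have hlast : Real.exp (-1 : ℝ)^j * (1 / (n:ℝ)^3) ≤ (1/2)^j * (1 / (n:ℝ)^3) := by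
    refine mul_le_mul_of_nonneg_right (pow_le_pow_left₀ (Real.exp_pos _).le ?_ j) (by positivity)
    have h2e : (2:ℝ) ≤ Real.exp 1 := by linarith [Real.add_one_le_exp (1:ℝ)]
    rw [Real.exp_neg, show (1/2 : ℝ) = (2:ℝ)⁻¹ by norm_num]
    exact inv_anti₀ (by norm_num) h2e
  calc (n.choose j : ℝ) * ((j^2).choose m : ℝ) * (c / n)^m
      ≤ (Real.exp 1 * n / j)^j * ((Real.exp 1 * (j^2:ℕ) / m) * (c/n))^m := step1
    _ ≤ (Real.exp 1 * n / j)^j * ((Real.exp 1 / 5) * ((j:ℝ)/n))^m := step2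
    _ = Real.exp 1 ^ j * (Real.exp 1 / 5)^m * ((j:ℝ)/n)^(m - j) := key
    _ ≤ Real.exp 1 ^ j * (Real.exp 1 / 5)^m * 1 := step3
    _ = Real.exp 1 ^ j * (Real.exp 1 / 5)^m := by ring
    _ ≤ Real.exp 1 ^ j * Real.exp (-(1/2:ℝ))^m := step4
    _ = Real.exp (j:ℝ) * Real.exp (-(m/2:ℝ)) := by rw [hexpj, hexpm]
    _ ≤ Real.exp (-(j:ℝ) - 3 * Real.log n) := step5
    _ = Real.exp (-1 : ℝ)^j * (1 / (n:ℝ)^3) := hfinal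
    _ ≤ (1/2)^j * (1 / (n:ℝ)^3) := hlast


private lemma perS {n : ℕ} {p : ℝ} (hp0 : 0 ≤ p) (hp1 : p ≤ 1) (X : ℝ) (S : Finset (Fin n)) :
    nwPr n p (fun η => 5 * X * S.card ≤ (tc S η : ℝ))
      ≤ ((S.card ^ 2).choose ⌈5 * X * (S.card : ℝ)⌉₊ : ℝ) * p ^ ⌈5 * X * (S.card : ℝ)⌉₊ := by
  classical
  set m := ⌈5 * X * (S.card : ℝ)⌉₊ with hm
  set P := S.sym2.filter (fun e => ¬ e.IsDiag) with hP
  have hsub : ∀ η : Sym2 (Fin n) → Bool, (5 * X * S.card ≤ (tc S η : ℝ)) →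
      ∃ F ∈ P.powersetCard m, ∀ e ∈ F, η e = true := by
    intro η hη
    have hmtc : m ≤ tc S η := Nat.ceil_le.mpr hη
    obtain ⟨F, hFsub, hFcard⟩ := Finset.exists_subset_card_eq hmtc
    refine ⟨F, Finset.mem_powersetCard.mpr ⟨?_, hFcard⟩, ?_⟩
    · intro e he
      have h := hFsub he
      rw [Finset.mem_filter] at h
      exact Finset.mem_filter.mpr ⟨h.1, h.2.1⟩
    · intro e he
      have h := hFsub he
      rw [Finset.mem_filter] at h
      exact h.2.2
  calc nwPr n p (fun η => 5 * X * S.card ≤ (tc S η : ℝ))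
      ≤ nwPr n p (fun η => ∃ F ∈ P.powersetCard m, ∀ e ∈ F, η e = true) :=
        nwPr_mono hp0 hp1 hsub
    _ ≤ ∑ F ∈ P.powersetCard m, nwPr n p (fun η => ∀ e ∈ F, η e = true) :=
        nwPr_union hp0 hp1 _ _
    _ = ∑ F ∈ P.powersetCard m, p ^ m := by
        refine Finset.sum_congr rfl fun F hF => ?_
        rw [nwPr_allTrue, (Finset.mem_powersetCard.mp hF).2]
    _ = (P.card.choose m : ℝ) * p ^ m := by
        rw [Finset.sum_const, Finset.card_powersetCard, nsmul_eq_mul]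
    _ ≤ ((S.card ^ 2).choose m : ℝ) * p ^ m := by
        have h1 : P.card ≤ S.card ^ 2 := by
          have h2 : P.card ≤ S.sym2.card := Finset.card_le_card (Finset.filter_subset _ _)
          have h3 : S.sym2.card = (S.card + 1).choose 2 := Finset.card_sym2 S
          have h4 : (S.card + 1).choose 2 ≤ S.card ^ 2 := by
            rw [Nat.choose_two_right, Nat.add_sub_cancel]
            apply Nat.div_le_of_le_mul
            nlinarith [Nat.le_of_lt_succ (Nat.lt_succ_of_le (le_refl S.card))]
          omega
        have h5 := Nat.choose_le_choose m h1
        exact mul_le_mul_of_nonneg_right (by exact_mod_cast h5) (pow_nonneg hp0 m)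

end AuxNW

/-- **Lemma (internal edges of connected sets).** Fix `k ≥ 1`, let `x_k > 0` solve
`x/720 − log(4(x+2k)) = 5`, fix `c > 0` and set `M = k + 1 + 10·max(x_k, c)`. Let `n > c`,
`p = c/n`, and let `H` be an `(n,k,p)` Newman–Watts small world. Then the probability that some
nonempty connected set `S` has `e(S,S) > M·max(|S|, log n)` is at most `1/n³`. -/
theorem internal_edges_of_connected_sets (k : ℕ) (hk : 1 ≤ k)
    (xk : ℝ) (hxk : 0 < xk) (hxksol : xk / 720 - Real.log (4 * (xk + 2 * k)) = 5)
    (c : ℝ) (hc : 0 < c) (n : ℕ) (hn : c < n) :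
    nwPr n (c / n) (fun η => ∃ S : Finset (Fin n),
      connectedSet (nwGraph n k η) S ∧ 1 ≤ S.card ∧
      ((k : ℝ) + 1 + 10 * max xk c) * max (S.card : ℝ) (Real.log n) <
        (eIn (nwGraph n k η) S : ℝ)) ≤
    1 / (n : ℝ) ^ 3 := by
  classical
  have hnR : (0:ℝ) < n := lt_trans hc hn
  have hn0 : 0 < n := by exact_mod_cast hnR
  set X := max xk c with hXdef
  have hxk36 : (3600:ℝ) ≤ xk := by
    have hk1 : (1:ℝ) ≤ k := by exact_mod_cast hk
    have h8 : (1:ℝ) ≤ 4 * (xk + 2 * k) := by nlinarith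
    have hlog := Real.log_nonneg h8
    linarith [hxksol]
  have hX36 : (3600:ℝ) ≤ X := le_trans hxk36 (le_max_left _ _)
  have hX1 : (1:ℝ) ≤ X := by linarith
  have hcX : c ≤ X := le_max_right _ _
  have hp0 : 0 ≤ c / n := by positivity
  have hp1 : c / n ≤ 1 := by rw [div_le_one hnR]; linarith
  set 𝒮 : Finset (Finset (Fin n)) :=
    Finset.univ.filter (fun S => Real.log n ≤ (S.card : ℝ) ∧ 1 ≤ S.card) with h𝒮
  set g : ℕ → ℝ := fun j => ((j ^ 2).choose ⌈5 * X * (j : ℝ)⌉₊ : ℝ)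
    * (c / n) ^ ⌈5 * X * (j : ℝ)⌉₊ with hg
  have hmono : ∀ η : Sym2 (Fin n) → Bool, (∃ S : Finset (Fin n),
      connectedSet (nwGraph n k η) S ∧ 1 ≤ S.card ∧
      ((k : ℝ) + 1 + 10 * max xk c) * max (S.card : ℝ) (Real.log n) <
        (eIn (nwGraph n k η) S : ℝ)) →
      (∃ S ∈ 𝒮, 5 * X * S.card ≤ (tc S η : ℝ)) := by
    rintro η ⟨S, _, h1, hlt⟩
    obtain ⟨S', hS', hb⟩ := reduce k hX1 hn0 η S h1 hlt
    exact ⟨S', Finset.mem_filter.mpr ⟨Finset.mem_univ _, hS'⟩, hb⟩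
  have grouped : ∑ S ∈ 𝒮, g S.card
      = ∑ j ∈ Finset.range (n + 1),
          ∑ S ∈ Finset.powersetCard j (Finset.univ : Finset (Fin n)),
            (if Real.log n ≤ (S.card : ℝ) ∧ 1 ≤ S.card then g S.card else 0) := by
    rw [h𝒮, Finset.sum_filter, ← Finset.powerset_univ, Finset.sum_powerset,
      Finset.card_univ, Fintype.card_fin]
  have inner : ∀ j ∈ Finset.range (n + 1),
      (∑ S ∈ Finset.powersetCard j (Finset.univ : Finset (Fin n)),
        (if Real.log n ≤ (S.card : ℝ) ∧ 1 ≤ S.card then g S.card else 0))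
      ≤ (if 1 ≤ j then (1/2 : ℝ)^j * (1 / (n:ℝ)^3) else 0) := by
    intro j hj
    have hjn : j ≤ n := Nat.lt_succ_iff.mp (Finset.mem_range.mp hj)
    have hconst : ∀ S ∈ Finset.powersetCard j (Finset.univ : Finset (Fin n)),
        (if Real.log n ≤ (S.card : ℝ) ∧ 1 ≤ S.card then g S.card else 0)
          = (if Real.log n ≤ (j : ℝ) ∧ 1 ≤ j then g j else 0) := by
      intro S hS
      rw [(Finset.mem_powersetCard.mp hS).2]
    rw [Finset.sum_congr rfl hconst, Finset.sum_const, Finset.card_powersetCard,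
      Finset.card_univ, Fintype.card_fin, nsmul_eq_mul]
    by_cases hcond : Real.log n ≤ (j : ℝ) ∧ 1 ≤ j
    · rw [if_pos hcond, if_pos hcond.2]
      have hmceil := Nat.le_ceil (5 * X * (j : ℝ))
      have hclaim := claim n j ⌈5 * X * (j : ℝ)⌉₊ X c hX36 hc hcX hcond.2 hjn hcond.1 hmceil
      calc (n.choose j : ℝ) * g j
          = (n.choose j : ℝ) * ((j ^ 2).choose ⌈5 * X * (j : ℝ)⌉₊ : ℝ)
            * (c / n) ^ ⌈5 * X * (j : ℝ)⌉₊ := by rw [hg]; ring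
        _ ≤ (1/2 : ℝ)^j * (1 / (n:ℝ)^3) := hclaim
    · rw [if_neg hcond, mul_zero]
      split
      · positivity
      · exact le_refl 0
  have geo : ∑ j ∈ Finset.range (n + 1),
      (if 1 ≤ j then (1/2 : ℝ)^j * (1 / (n:ℝ)^3) else 0) ≤ 1 / (n:ℝ)^3 := by
    rw [Finset.sum_range_succ']
    rw [if_neg (by omega : ¬ (1 ≤ 0))]
    rw [add_zero]
    have heq : ∀ i ∈ Finset.range n,
        (if 1 ≤ i + 1 then ((1/2 : ℝ))^(i+1) * (1 / (n:ℝ)^3) else 0)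
          = (1/2 : ℝ)^(i+1) * (1 / (n:ℝ)^3) := fun i _ => if_pos (by omega)
    rw [Finset.sum_congr rfl heq]
    have hgeo : ∑ i ∈ Finset.range n, ((1/2 : ℝ))^(i+1) ≤ 1 := by
      have h := geom_sum_eq (show ((1:ℝ)/2) ≠ 1 by norm_num) n
      have hpow : (0:ℝ) ≤ (1/2 : ℝ)^n := by positivity
      have hdiv : ((1/2 : ℝ)^n - 1)/((1/2 : ℝ) - 1) = 2 - 2 * (1/2 : ℝ)^n := by
        rw [div_eq_iff (by norm_num : ((1/2 : ℝ) - 1) ≠ 0)]; ring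
      calc ∑ i ∈ Finset.range n, ((1/2 : ℝ))^(i+1)
          = (1/2) * ∑ i ∈ Finset.range n, ((1/2 : ℝ))^i := by
            rw [Finset.mul_sum]
            exact Finset.sum_congr rfl fun i _ => by ring
        _ ≤ 1 := by rw [h, hdiv]; nlinarith
    calc ∑ i ∈ Finset.range n, (1/2 : ℝ)^(i+1) * (1 / (n:ℝ)^3)
        = (∑ i ∈ Finset.range n, (1/2 : ℝ)^(i+1)) * (1 / (n:ℝ)^3) := by
          rw [Finset.sum_mul]
      _ ≤ 1 * (1 / (n:ℝ)^3) := mul_le_mul_of_nonneg_right hgeo (by positivity)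
      _ = 1 / (n:ℝ)^3 := one_mul _
  calc nwPr n (c / n) (fun η => ∃ S : Finset (Fin n),
        connectedSet (nwGraph n k η) S ∧ 1 ≤ S.card ∧
        ((k : ℝ) + 1 + 10 * max xk c) * max (S.card : ℝ) (Real.log n) <
          (eIn (nwGraph n k η) S : ℝ))
      ≤ nwPr n (c / n) (fun η => ∃ S ∈ 𝒮, 5 * X * S.card ≤ (tc S η : ℝ)) :=
        nwPr_mono hp0 hp1 hmono
    _ ≤ ∑ S ∈ 𝒮, nwPr n (c / n) (fun η => 5 * X * S.card ≤ (tc S η : ℝ)) :=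
        nwPr_union hp0 hp1 𝒮 _
    _ ≤ ∑ S ∈ 𝒮, g S.card := Finset.sum_le_sum fun S _ => perS hp0 hp1 X S
    _ = _ := grouped
    _ ≤ ∑ j ∈ Finset.range (n + 1),
        (if 1 ≤ j then (1/2 : ℝ)^j * (1 / (n:ℝ)^3) else 0) := Finset.sum_le_sum inner
    _ ≤ 1 / (n:ℝ)^3 := geo

end
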